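/- Suppose v(cμ) = f(c)·v(μ) for all c, μ > 0. Then the beta divergence and alpha divergence are related by d_β(x, μ) = (μ/f(μ)) · d_α(x, μ) for all x, μ > 0, where d_α(x,μ) = μ·∫_1^{x/μ} ((x/μ)−t)/v(t) dt and d_β(x,μ) = ∫_μ^x (x−t)/v(t) dt. -/

import Mathlib

theorem beta_alpha_connection
    (v : ℝ → ℝ) (hv : ContinuousOn v (Set.Ioi 0)) (hvpos : ∀ t > 0, 0 < v t)
    (f : ℝ → ℝ) (hf : ∀ c > 0, ∀ μ > 0, v (c * μ) = f c * v μ)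
    (hfpos : ∀ c > 0, 0 < f c) (hf1 : f 1 = 1) :
    ∀ x > (0:ℝ), ∀ μ > (0:ℝ),
      (∫ t in μ..x, (x - t) / v t)
        = (μ / f μ) * (μ * ∫ t in (1:ℝ)..(x / μ), (x / μ - t) / v t) := by
  intro x hx μ hμ
  have hμ0 : μ ≠ 0 := ne_of_gt hμ
  have hv1 : 0 < v 1 := hvpos 1 one_pos
  have hvμ : 0 < v μ := hvpos μ hμ
  have hfμ : f μ = v μ / v 1 := by
    have h := hf μ hμ 1 one_pos
    rw [mul_one] at h
    field_simp [h]
    linarith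
  have hsub : (∫ t in μ..x, (x - t) / v t)
      = μ • ∫ s in (1:ℝ)..(x / μ), (x - μ * s) / v (μ * s) := by
    rw [intervalIntegral.smul_integral_comp_mul_left (fun t => (x - t) / v t) μ,
      mul_one, mul_div_cancel₀ _ hμ0]
  rw [hsub]
  have hcong : ∀ s ∈ Set.uIcc (1:ℝ) (x / μ),
      (x - μ * s) / v (μ * s) = (μ * v 1 / v μ) * ((x / μ - s) / v s) := by
    intro s hs
    have hs0 : 0 < s := by
      rcases Set.mem_uIcc.mp hs with h | h
      · linarith [h.1]
      · exact lt_of_lt_of_le (div_pos hx hμ) h.1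
    have hvs : 0 < v s := hvpos s hs0
    have h1 : v (μ * s) = f s * v μ := by rw [mul_comm]; exact hf s hs0 μ hμ
    have h2 : f s = v s / v 1 := by
      have h := hf s hs0 1 one_pos
      rw [mul_one] at h
      field_simp [h]
      linarith
    rw [h1, h2]
    field_simp
  rw [intervalIntegral.integral_congr hcong, intervalIntegral.integral_const_mul]
  rw [hfμ]
  rw [smul_eq_mul, div_div_eq_mul_div]
  ring
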